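/- With ρ a density operator, σ positive semidefinite, and S(a) = {ρ − e^{a}σ > 0} the spectral projection onto the positive part of ρ − e^{a}σ, the inequality α(a) + e^{a} β(a) ≤ 1 holds, where α(a) = 1 − Tr(ρ S(a)) and β(a) = Tr(σ S(a)). In particular β(a) ≤ e^{−a}. -/

import Mathlib

open scoped ComplexOrder
open Matrix


lemma trace_nonneg_of_psd {m : Type*} [Fintype m] [DecidableEq m]
    {Z : Matrix m m ℂ} (hZ : Z.PosSemidef) : 0 ≤ Z.trace := by
  rw [Matrix.trace]
  apply Finset.sum_nonneg
  intro i _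
  exact hZ.diag_nonneg

open scoped MatrixOrder in
lemma trace_mul_nonneg_of_psd {m : Type*} [Fintype m] [DecidableEq m]
    {X Y : Matrix m m ℂ} (hX : X.PosSemidef) (hY : Y.PosSemidef) :
    0 ≤ (X * Y).trace := by
  have h1 : X * Y = X * (CFC.sqrt Y * CFC.sqrt Y) := by rw [CFC.sqrt_mul_sqrt_self Y hY.nonneg]
  rw [h1, ← mul_assoc, Matrix.trace_mul_cycle]
  have h2 : CFC.sqrt Y * X * CFC.sqrt Y = (CFC.sqrt Y)ᴴ * X * CFC.sqrt Y := by
    rw [(CFC.sqrt_nonneg Y).posSemidef.isHermitian.eq]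
  rw [h2]
  exact trace_nonneg_of_psd (hX.conjTranspose_mul_mul_same _)


/-- The spectral projection of a matrix onto the direct sum of its eigenspaces
corresponding to strictly positive eigenvalues (defined to be `0` if the matrix
is not Hermitian). -/
noncomputable def posProj {m : Type*} [Fintype m] [DecidableEq m]
    (A : Matrix m m ℂ) : Matrix m m ℂ :=
  if hA : A.IsHermitian then
    (hA.eigenvectorUnitary : Matrix m m ℂ) *
      Matrix.diagonal (fun i => if 0 < hA.eigenvalues i then (1 : ℂ) else 0) *
      star (hA.eigenvectorUnitary : Matrix m m ℂ)
  else 0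

/-- For the likelihood test `S(a) = {ρ − e^a σ > 0}`, one has
`α(a) + e^a β(a) ≤ 1`; in particular `β(a) ≤ e^{-a}`. -/
theorem alpha_add_exp_mul_beta_le_one {m : Type*} [Fintype m] [DecidableEq m]
    (ρ σ : Matrix m m ℂ) (hρ : ρ.PosSemidef) (hρ1 : ρ.trace = 1)
    (hσ : σ.PosSemidef) (a : ℝ) :
    (1 - (ρ * posProj (ρ - (Real.exp a : ℂ) • σ)).trace.re) +
        Real.exp a * (σ * posProj (ρ - (Real.exp a : ℂ) • σ)).trace.re ≤ 1 ∧
      (σ * posProj (ρ - (Real.exp a : ℂ) • σ)).trace.re ≤ Real.exp (-a) := by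
  set A : Matrix m m ℂ := ρ - (Real.exp a : ℂ) • σ with hAdef
  have hA : A.IsHermitian := by
    refine hρ.isHermitian.sub ?_
    show ((Real.exp a : ℂ) • σ)ᴴ = (Real.exp a : ℂ) • σ
    rw [Matrix.conjTranspose_smul, hσ.isHermitian.eq]
    simp only [Complex.star_def, Complex.conj_ofReal]
  set U : Matrix m m ℂ := (hA.eigenvectorUnitary : Matrix m m ℂ) with hU
  set d : m → ℂ := fun i => if 0 < hA.eigenvalues i then (1 : ℂ) else 0 with hd
  have hP : posProj A = U * Matrix.diagonal d * Uᴴ := by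
    rw [posProj, dif_pos hA]
    rfl
  have hUU : U * Uᴴ = 1 := by
    simpa [Matrix.star_eq_conjTranspose] using
      (Matrix.mem_unitaryGroup_iff).mp hA.eigenvectorUnitary.2
  have hUU' : Uᴴ * U = 1 := by
    simpa [Matrix.star_eq_conjTranspose] using
      (Matrix.mem_unitaryGroup_iff').mp hA.eigenvectorUnitary.2
  -- P is PSD
  have hPpsd : (posProj A).PosSemidef := by
    rw [hP]
    refine Matrix.PosSemidef.mul_mul_conjTranspose_same ?_ U
    refine Matrix.PosSemidef.diagonal ?_
    intro i
    by_cases h : 0 < hA.eigenvalues i <;> simp [hd, h]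
  -- 1 - P is PSD
  have h1P : (1 : Matrix m m ℂ) - posProj A = U * Matrix.diagonal (fun i => 1 - d i) * Uᴴ := by
    have : Matrix.diagonal (fun i => 1 - d i) = 1 - Matrix.diagonal d := by
      rw [← Matrix.diagonal_one, Matrix.diagonal_sub]
    rw [this, hP]
    rw [Matrix.mul_sub, Matrix.sub_mul, Matrix.mul_one, hUU]
  have h1Ppsd : ((1 : Matrix m m ℂ) - posProj A).PosSemidef := by
    rw [h1P]
    refine Matrix.PosSemidef.mul_mul_conjTranspose_same ?_ U
    refine Matrix.PosSemidef.diagonal ?_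
    intro i
    by_cases h : 0 < hA.eigenvalues i <;> simp [hd, h]
  -- trace(A * P) ≥ 0
  have key : ∀ e f : m → ℂ, (U * Matrix.diagonal e * Uᴴ) * (U * Matrix.diagonal f * Uᴴ)
      = U * Matrix.diagonal (fun i => e i * f i) * Uᴴ := by
    intro e f
    simp only [Matrix.mul_assoc]
    rw [← Matrix.mul_assoc Uᴴ U, hUU', Matrix.one_mul, ← Matrix.mul_assoc (Matrix.diagonal e),
      Matrix.diagonal_mul_diagonal]
  have hAP : 0 ≤ (A * posProj A).trace := by
    have hspec : A = U * Matrix.diagonal (RCLike.ofReal ∘ hA.eigenvalues) * Uᴴ := by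
      simpa [Matrix.star_eq_conjTranspose] using hA.spectral_theorem
    have hthis : A * posProj A
        = U * Matrix.diagonal (fun i => (RCLike.ofReal ∘ hA.eigenvalues) i * d i) * Uᴴ := by
      rw [hP]
      conv_lhs => rw [hspec]
      exact key _ _
    rw [hthis, Matrix.trace_mul_cycle, hUU', Matrix.one_mul, Matrix.trace_diagonal]
    apply Finset.sum_nonneg
    intro i _
    by_cases h : 0 < hA.eigenvalues i
    · simp only [hd, Function.comp_apply, if_pos h, mul_one]
      exact RCLike.ofReal_nonneg.mpr h.le
    · simp [hd, Function.comp_apply, if_neg h]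
  -- trace(ρ * P).re ≤ 1
  have hρP : (ρ * posProj A).trace.re ≤ 1 := by
    have h0 : 0 ≤ (ρ * ((1 : Matrix m m ℂ) - posProj A)).trace := trace_mul_nonneg_of_psd hρ h1Ppsd
    have : (ρ * ((1 : Matrix m m ℂ) - posProj A)).trace = 1 - (ρ * posProj A).trace := by
      rw [Matrix.mul_sub, Matrix.mul_one]
      rw [Matrix.trace_sub, hρ1]
    rw [this] at h0
    have := (Complex.le_def.mp h0).1
    simpa using this
  -- key: e^a * tr(σP).re ≤ tr(ρP).re
  have hkey : Real.exp a * (σ * posProj A).trace.re ≤ (ρ * posProj A).trace.re := by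
    have : (A * posProj A).trace = (ρ * posProj A).trace - (Real.exp a : ℂ) * (σ * posProj A).trace := by
      rw [hAdef, Matrix.sub_mul, Matrix.trace_sub, Matrix.smul_mul, Matrix.trace_smul]
      simp [smul_eq_mul]
    rw [this] at hAP
    have hre := (Complex.le_def.mp hAP).1
    simp only [Complex.sub_re, Complex.mul_re, Complex.ofReal_re, Complex.ofReal_im,
      Complex.zero_re, zero_mul, sub_zero] at hre
    linarith
  constructor
  · linarith
  · have hexp : (0:ℝ) < Real.exp a := Real.exp_pos a
    have h1 : Real.exp a * (σ * posProj A).trace.re ≤ 1 := le_trans hkey hρP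
    rw [Real.exp_neg, ← mul_le_mul_iff_right₀ hexp, mul_inv_cancel₀ hexp.ne']
    exact h1
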